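/- The unique solution a* ≥ 0 of the equation 0.5 = 2a* + √(2a* ln 2)·log₂ e satisfies 0.053 < a* < 0.054 (a* ≈ 0.0535). -/

import Mathlib

set_option maxHeartbeats 2000000 in
/-- The unique nonnegative solution `a*` of `0.5 = 2a* + √(2a* ln 2) · log₂ e`
(where `log₂ e = 1/ln 2`) satisfies `0.053 < a* < 0.054` (`a* ≈ 0.0535`). -/
theorem largest_gap_value :
    ∃ a : ℝ, 0 ≤ a ∧
      (0.5 : ℝ) = 2 * a + Real.sqrt (2 * a * Real.log 2) * (1 / Real.log 2) ∧
      0.053 < a ∧ a < 0.054 ∧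
      ∀ a' : ℝ, 0 ≤ a' →
        (0.5 : ℝ) = 2 * a' + Real.sqrt (2 * a' * Real.log 2) * (1 / Real.log 2) → a' = a := by
  set L := Real.log 2 with hLdef
  have hL1 : (0.6931471803 : ℝ) < L := Real.log_two_gt_d9
  have hL2 : L < 0.6931471808 := Real.log_two_lt_d9
  have hL : (0 : ℝ) < L := by linarith
  -- s = √(1 + 2L)
  set s := Real.sqrt (1 + 2 * L) with hsdef
  have hs0 : 0 ≤ s := Real.sqrt_nonneg _
  have hs2 : s ^ 2 = 1 + 2 * L := Real.sq_sqrt (by linarith)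
  have hslb : (1.544 : ℝ) < s := by nlinarith
  have hsub : s < 1.545 := by nlinarith
  set t := (s - 1) / 2 with htdef
  have ht0 : 0 ≤ t := by
    have : (1 : ℝ) ≤ s := by linarith
    simp [htdef]; linarith
  have htt : t ^ 2 + t = L / 2 := by
    have : (s - 1) ^ 2 = s ^ 2 - 2 * s + 1 := by ring
    simp only [htdef]; nlinarith
  refine ⟨t ^ 2 / (2 * L), by positivity, ?_, ?_, ?_, ?_⟩
  · have h2 : 2 * (t ^ 2 / (2 * L)) * L = t ^ 2 := by field_simp
    rw [h2, Real.sqrt_sq ht0]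
    field_simp
    nlinarith
  · -- 0.053 < a ; a = 1/4 - t/(2L)
    have ha : t ^ 2 / (2 * L) = 1 / 4 - t / (2 * L) := by
      field_simp; nlinarith
    rw [ha]
    have htub : t < 0.2725 := by simp only [htdef]; linarith
    have : t / (2 * L) < 0.2725 / (2 * 0.6931471803) := by
      apply div_lt_div₀ (by linarith) (by linarith) (by norm_num) (by linarith)
    nlinarith
  · have ha : t ^ 2 / (2 * L) = 1 / 4 - t / (2 * L) := by
      field_simp; nlinarith
    rw [ha]
    have htlb : (0.272 : ℝ) < t := by simp only [htdef]; linarith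
    have : (0.272 : ℝ) / (2 * 0.6931471808) < t / (2 * L) := by
      apply div_lt_div₀ htlb (by linarith) ht0 (by positivity)
    nlinarith
  · intro a' ha' heq
    set u := Real.sqrt (2 * a' * L) with hudef
    have hu0 : 0 ≤ u := Real.sqrt_nonneg _
    have hu2 : u ^ 2 = 2 * a' * L := Real.sq_sqrt (by positivity)
    have hx : u = (0.5 - 2 * a') * L := by
      have h1 : u * (1 / L) = 0.5 - 2 * a' := by linarith
      calc u = u * (1 / L) * L := by field_simp
        _ = (0.5 - 2 * a') * L := by rw [h1]
    have huu : u ^ 2 + u = L / 2 := by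
      rw [hu2, hx]; ring
    have hfac : (u - t) * (u + t + 1) = 0 := by linear_combination huu - htt
    have hut : u = t := by
      rcases mul_eq_zero.mp hfac with h | h
      · linarith
      · linarith
    have : a' = u ^ 2 / (2 * L) := by rw [hu2]; field_simp
    rw [this, hut]
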